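/- Deficiency-reducing bucket partition (Claim for Bob's side): There exists N such that for every n ≥ N the following holds with m = n^256 (so √m = n^128 is an integer). Let I ⊆ [n] be nonempty and let Y ⊆ ({0,1}^m)^I be nonempty with |I|·m − log₂|Y| ≤ n³ + 1, and set ε = (1/2) · n^(−5|I|). Then there is a partition Y = Y⁰ ∪ Y¹ ∪ ⋯ ∪ Y^k (with Y⁰ possibly empty and Y¹,…,Y^k nonempty) such that |Y⁰| ≤ (ε/3)·|Y| and every part Y^c with c ≥ 1 satisfies: (P1) for each coordinate i ∈ I, at most 2n³ of the √m buckets of coordinate i are fixed in Y^c; and (P2) for every ℓ ∈ [√m]^I such that no bucket T_{ℓ_i} (i ∈ I) is fixed in Y^c, and for every γ ∈ {0,1}^{T_ℓ}, |{y ∈ Y^c : y_{T_ℓ} = γ}| ≤ 2 · 2^(−|I|√m) · |Y^c|. -/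

import Mathlib

open Finset

/-- The bucket index of `j ∈ [m]` where `m = n^256` is partitioned into `√m = n^128`
consecutive buckets of size `√m = n^128` each. -/
def bucket (n : ℕ) (j : Fin (n ^ 256)) : Fin (n ^ 128) :=
  ⟨j.val / n ^ 128, by
    have hj := j.isLt
    have hn : 0 < n := by
      rcases Nat.eq_zero_or_pos n with rfl | h
      · exact absurd hj (by norm_num)
      · exact h
    have h256 : n ^ 256 = n ^ 128 * n ^ 128 := by ring
    exact Nat.div_lt_of_lt_mul (h256 ▸ hj)⟩

/-- The bucket `T_{ℓᵢ}` of coordinate `i` is *fixed* in `Yc ⊆ ({0,1}^m)^I`: all strings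
in `Yc` agree on the bits in positions `{i} × T_{ℓᵢ}`. -/
def BucketFixed (n : ℕ) (I : Finset (Fin n))
    (Yc : Finset ({i // i ∈ I} → Fin (n ^ 256) → Bool))
    (i : {i // i ∈ I}) (ℓi : Fin (n ^ 128)) : Prop :=
  ∀ y ∈ Yc, ∀ y' ∈ Yc, ∀ j : Fin (n ^ 256), bucket n j = ℓi → y i j = y' i j

namespace BPB

variable (n : ℕ) (I : Finset (Fin n))

abbrev V := ({i // i ∈ I} → Fin (n ^ 256) → Bool)

open Classical in
noncomputable def fixcount (C : Finset (V n I)) (i : {i // i ∈ I}) : ℕ :=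
  ((univ : Finset (Fin (n ^ 128))).filter fun ℓi => BucketFixed n I C i ℓi).card

open Classical in
noncomputable def Fix (C : Finset (V n I)) : Finset ({i // i ∈ I} × Fin (n ^ 256)) :=
  univ.filter fun p => BucketFixed n I C p.1 (bucket n p.2)

def Clean (C : Finset (V n I)) : Prop :=
  ∀ ℓ : {i // i ∈ I} → Fin (n ^ 128), (∀ i, ¬ BucketFixed n I C i (ℓ i)) →
    ∀ γ : V n I,
      (C.filter fun y => ∀ i, ∀ j : Fin (n ^ 256), bucket n j = ℓ i → y i j = γ i j).card *
          2 ^ (I.card * n ^ 128 - 1) ≤ C.card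

def Spec : Finset (V n I) → List (Finset (V n I) × ℕ) → Prop
  | Z, [] => Z = ∅
  | Z, C :: L =>
      C.1 ⊆ Z ∧ C.1.Nonempty ∧ Clean n I C.1 ∧ (∀ i, C.2 ≤ fixcount n I C.1 i) ∧
        Z.card ≤ C.1.card * 2 ^ (C.2 * (I.card * n ^ 128 - 1)) ∧ Spec (Z \ C.1) L

theorem spec_exists (hn : 1 ≤ n) (hI : I.Nonempty) (Z : Finset (V n I)) :
    ∃ L, Spec n I Z L := by
  classical
  obtain ⟨i0, hi0⟩ := hI
  have i₀ : {i // i ∈ I} := ⟨i0, hi0⟩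
  suffices H : ∀ (N : ℕ) (Z : Finset (V n I)), Z.card ≤ N → ∃ L, Spec n I Z L from
    H Z.card Z le_rfl
  intro N
  induction N with
  | zero =>
    intro Z hZ
    have : Z = ∅ := Finset.card_eq_zero.mp (Nat.le_zero.mp hZ)
    exact ⟨[], by simp [Spec, this]⟩
  | succ N ih =>
    intro Z hZN
    set s1 := I.card * n ^ 128 - 1 with hs1
    set W : ℕ × (({i // i ∈ I} → Finset (Fin (n ^ 128))) × V n I) → ℕ := fun q =>
      (Z.filter fun y => ∀ i, ∀ j : Fin (n ^ 256),
        bucket n j ∈ q.2.1 i → y i j = q.2.2 i j).card * 2 ^ (q.1 * s1) with hW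
    set Cand : Finset (ℕ × (({i // i ∈ I} → Finset (Fin (n ^ 128))) × V n I)) :=
      (Finset.range (n ^ 128 + 1) ×ˢ
        (univ : Finset ((({i // i ∈ I} → Finset (Fin (n ^ 128))) × V n I)))).filter
        (fun q => 1 ≤ q.1 ∧ (∀ i, (q.2.1 i).card = q.1) ∧ Z.card < W q) with hCand
    by_cases hc : Cand.Nonempty
    · obtain ⟨q, hqC, hqmax⟩ := Finset.exists_max_image Cand W hc
      obtain ⟨hqmem, hq1, hqshape, hqW⟩ := Finset.mem_filter.mp hqC
      set t := q.1 with ht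
      set S := q.2.1 with hS
      set β := q.2.2 with hβ
      set C : Finset (V n I) :=
        Z.filter fun y => ∀ i, ∀ j : Fin (n ^ 256), bucket n j ∈ S i → y i j = β i j with hC
      have hWq : W q = C.card * 2 ^ (t * s1) := rfl
      have hCsub : C ⊆ Z := Finset.filter_subset _ _
      have hCpos : 0 < C.card := by
        rcases Nat.eq_zero_or_pos C.card with h0 | h
        · rw [hWq, h0] at hqW; simp at hqW
        · exact h
      have hCne : C.Nonempty := Finset.card_pos.mp hCpos
      -- every bucket in S i is fixed in C
      have hfixS : ∀ i, ∀ b ∈ S i, BucketFixed n I C i b := by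
        intro i b hb y hy y' hy' j hj
        have h1 := (Finset.mem_filter.mp hy).2 i j (by rw [hj]; exact hb)
        have h2 := (Finset.mem_filter.mp hy').2 i j (by rw [hj]; exact hb)
        rw [h1, h2]
      have hfixcount : ∀ i, t ≤ fixcount n I C i := by
        intro i
        have : S i ⊆ (univ : Finset (Fin (n ^ 128))).filter
            fun ℓi => BucketFixed n I C i ℓi := by
          intro b hb
          exact Finset.mem_filter.mpr ⟨Finset.mem_univ _, hfixS i b hb⟩
        calc t = (S i).card := (hqshape i).symm
          _ ≤ _ := Finset.card_le_card this
      have hClean : Clean n I C := by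
        intro ℓ hℓ γ
        have hnotin : ∀ i, ℓ i ∉ S i := fun i hin => hℓ i (hfixS i (ℓ i) hin)
        set S' : {i // i ∈ I} → Finset (Fin (n ^ 128)) :=
          fun i => insert (ℓ i) (S i) with hS'
        set β' : V n I := fun i j => if bucket n j = ℓ i then γ i j else β i j with hβ'
        have hshape' : ∀ i, (S' i).card = t + 1 := by
          intro i
          rw [hS', Finset.card_insert_of_notMem (hnotin i), hqshape i]
        -- the filtered sets agree
        have hfeq : (Z.filter fun y => ∀ i, ∀ j : Fin (n ^ 256),
            bucket n j ∈ S' i → y i j = β' i j) =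
            C.filter (fun y => ∀ i, ∀ j : Fin (n ^ 256),
              bucket n j = ℓ i → y i j = γ i j) := by
          rw [hC, Finset.filter_filter]
          apply Finset.filter_congr
          intro y _
          constructor
          · intro h
            constructor
            · intro i j hj
              have hne : bucket n j ≠ ℓ i := by
                intro he; exact hnotin i (he ▸ hj)
              have := h i j (by rw [hS']; exact Finset.mem_insert_of_mem hj)
              simpa [hβ', hne] using this
            · intro i j hj
              have := h i j (by rw [hS']; exact hj ▸ Finset.mem_insert_self _ _)
              simpa [hβ', hj] using this
          · rintro ⟨h1, h2⟩ i j hj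
            rw [hS', Finset.mem_insert] at hj
            rcases hj with hj | hj
            · simpa [hβ', hj] using h2 i j hj
            · have hne : bucket n j ≠ ℓ i := by
                intro he; exact hnotin i (he ▸ hj)
              simpa [hβ', hne] using h1 i j hj
        have hle : W (t + 1, S', β') ≤ W q := by
          by_cases hq' : (t + 1, S', β') ∈ Cand
          · exact hqmax _ hq'
          · have hmem' : (t + 1, S', β') ∈
                Finset.range (n ^ 128 + 1) ×ˢ
                  (univ : Finset ((({i // i ∈ I} → Finset (Fin (n ^ 128))) × V n I))) := by
              refine Finset.mem_product.mpr ⟨Finset.mem_range.mpr ?_, Finset.mem_univ _⟩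
              have hc1 : t + 1 ≤ n ^ 128 := by
                have h := Finset.card_le_univ (S' i₀)
                rw [hshape' i₀] at h
                simpa using h
              omega
            have hnot : ¬ (1 ≤ t + 1 ∧ (∀ i, (S' i).card = t + 1) ∧
                Z.card < W (t + 1, S', β')) := by
              intro h
              exact hq' (Finset.mem_filter.mpr ⟨hmem', h⟩)
            push_neg at hnot
            exact le_trans (hnot (by omega) hshape') (le_of_lt hqW)
        -- unfold and cancel
        rw [hWq] at hle
        have hW' : W (t + 1, S', β') =
            (C.filter (fun y => ∀ i, ∀ j : Fin (n ^ 256),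
              bucket n j = ℓ i → y i j = γ i j)).card * 2 ^ ((t + 1) * s1) := by
          have h0 : W (t + 1, S', β') = (Z.filter fun y => ∀ i, ∀ j : Fin (n ^ 256),
              bucket n j ∈ S' i → y i j = β' i j).card * 2 ^ ((t + 1) * s1) := rfl
          rw [h0, hfeq]
        rw [hW'] at hle
        have hexp : (t + 1) * s1 = s1 + t * s1 := by ring
        rw [hexp, pow_add, ← mul_assoc] at hle
        exact Nat.le_of_mul_le_mul_right hle (Nat.pow_pos (by norm_num))
      -- recurse
      have hlt : (Z \ C).card < Z.card :=
        Finset.card_lt_card (Finset.sdiff_ssubset hCsub hCne)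
      obtain ⟨L, hL⟩ := ih (Z \ C) (by omega)
      exact ⟨(C, t) :: L, hCsub, hCne, hClean, hfixcount, le_of_lt hqW, hL⟩
    · by_cases hZ : Z = ∅
      · exact ⟨[], by simp [Spec, hZ]⟩
      · refine ⟨[(Z, 0)], Finset.Subset.refl _,
          Finset.nonempty_iff_ne_empty.mpr hZ, ?_, fun i => Nat.zero_le _,
          by simp, by simp [Spec]⟩
        intro ℓ hℓ γ
        set q : ℕ × (({i // i ∈ I} → Finset (Fin (n ^ 128))) × V n I) :=
          (1, fun i => ({ℓ i} : Finset (Fin (n ^ 128))), γ) with hq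
        have hmem' : q ∈ Finset.range (n ^ 128 + 1) ×ˢ
            (univ : Finset ((({i // i ∈ I} → Finset (Fin (n ^ 128))) × V n I))) := by
          refine Finset.mem_product.mpr ⟨Finset.mem_range.mpr ?_, Finset.mem_univ _⟩
          have h1 : 1 ≤ n ^ 128 := Nat.one_le_pow _ _ hn
          have h2 : q.1 = 1 := rfl
          omega
        have hnot : ¬ (1 ≤ q.1 ∧ (∀ i, (q.2.1 i).card = q.1) ∧ Z.card < W q) := by
          intro h
          exact hc ⟨q, Finset.mem_filter.mpr ⟨hmem', h⟩⟩
        push_neg at hnot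
        have hle : W q ≤ Z.card := hnot le_rfl (fun i => Finset.card_singleton _)
        have hfeq : (Z.filter fun y => ∀ i, ∀ j : Fin (n ^ 256),
            bucket n j ∈ ({ℓ i} : Finset (Fin (n ^ 128))) → y i j = γ i j) =
            Z.filter (fun y => ∀ i, ∀ j : Fin (n ^ 256),
              bucket n j = ℓ i → y i j = γ i j) := by
          apply Finset.filter_congr
          intro y _
          simp [Finset.mem_singleton]
        have : W q = (Z.filter (fun y => ∀ i, ∀ j : Fin (n ^ 256),
            bucket n j = ℓ i → y i j = γ i j)).card * 2 ^ (1 * s1) := by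
          have h0 : W q = (Z.filter fun y => ∀ i, ∀ j : Fin (n ^ 256),
              bucket n j ∈ ({ℓ i} : Finset (Fin (n ^ 128))) → y i j = γ i j).card * 2 ^ (1 * s1) := rfl
          rw [h0, hfeq]
        rw [this, one_mul] at hle
        exact hle


theorem spec_subset : ∀ (Z : Finset (V n I)) (L), Spec n I Z L → ∀ p ∈ L, p.1 ⊆ Z := by
  intro Z L
  induction L generalizing Z with
  | nil => intro _ p hp; simp at hp
  | cons C L ih =>
    rintro ⟨h1, _, _, _, _, h6⟩ p hp
    rcases List.mem_cons.mp hp with rfl | hp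
    · exact h1
    · exact (ih _ h6 p hp).trans (Finset.sdiff_subset)

theorem spec_mass : ∀ (Z : Finset (V n I)) (L), Spec n I Z L →
    (L.map fun p => p.1.card).sum = Z.card := by
  intro Z L
  induction L generalizing Z with
  | nil => intro h; rw [h]; simp
  | cons C L ih =>
    rintro ⟨h1, _, _, _, _, h6⟩
    have := ih _ h6
    have hle := Finset.card_le_card h1
    have hsd := Finset.card_sdiff_of_subset h1
    simp only [List.map_cons, List.sum_cons, this, hsd]
    omega

theorem spec_mem : ∀ (Z : Finset (V n I)) (L), Spec n I Z L →
    ∀ y, y ∈ Z ↔ ∃ p ∈ L, y ∈ p.1 := by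
  intro Z L
  induction L generalizing Z with
  | nil => intro h y; rw [h]; simp
  | cons C L ih =>
    rintro ⟨h1, _, _, _, _, h6⟩ y
    constructor
    · intro hy
      by_cases hyC : y ∈ C.1
      · exact ⟨C, List.mem_cons_self, hyC⟩
      · obtain ⟨p, hp, hyp⟩ := (ih _ h6 y).mp (Finset.mem_sdiff.mpr ⟨hy, hyC⟩)
        exact ⟨p, List.mem_cons_of_mem _ hp, hyp⟩
    · rintro ⟨p, hp, hyp⟩
      rcases List.mem_cons.mp hp with rfl | hp
      · exact h1 hyp
      · exact ((spec_subset n I _ L h6 p hp).trans Finset.sdiff_subset) hyp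

theorem spec_pairwise : ∀ (Z : Finset (V n I)) (L), Spec n I Z L →
    L.Pairwise fun p q => Disjoint p.1 q.1 := by
  intro Z L
  induction L generalizing Z with
  | nil => intro _; exact List.Pairwise.nil
  | cons C L ih =>
    rintro ⟨h1, _, _, _, _, h6⟩
    refine List.Pairwise.cons ?_ (ih _ h6)
    intro p hp
    have hsub : p.1 ⊆ Z \ C.1 := spec_subset n I _ L h6 p hp
    exact (Finset.disjoint_sdiff).mono_right hsub

theorem spec_parts : ∀ (Z : Finset (V n I)) (L), Spec n I Z L →
    ∀ p ∈ L, p.1.Nonempty ∧ Clean n I p.1 ∧ (∀ i, p.2 ≤ fixcount n I p.1 i) := by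
  intro Z L
  induction L generalizing Z with
  | nil => intro _ p hp; simp at hp
  | cons C L ih =>
    rintro ⟨h1, h2, h3, h4, h5, h6⟩ p hp
    rcases List.mem_cons.mp hp with rfl | hp
    · exact ⟨h2, h3, h4⟩
    · exact ih _ h6 p hp

theorem list_filter_sum_le (L : List (Finset (V n I) × ℕ)) (q : Finset (V n I) × ℕ → Bool) :
    ((L.filter q).map fun p => p.1.card).sum ≤ (L.map fun p => p.1.card).sum := by
  induction L with
  | nil => simp
  | cons C L ih =>
    by_cases h : q C
    · rw [List.filter_cons_of_pos h]
      simp only [List.map_cons, List.sum_cons]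
      omega
    · rw [List.filter_cons_of_neg (by simpa using h)]
      simp only [List.map_cons, List.sum_cons]
      omega

theorem card_cover {α : Type*} [DecidableEq α] :
    ∀ (L : List (Finset α × ℕ)) (A : Finset α),
      (∀ y ∈ A, ∃ p ∈ L, y ∈ p.1) → A.card ≤ (L.map fun p => p.1.card).sum := by
  intro L
  induction L with
  | nil =>
    intro A h
    have : A = ∅ := by
      rw [Finset.eq_empty_iff_forall_notMem]
      intro y hy
      obtain ⟨p, hp, _⟩ := h y hy
      simp at hp
    simp [this]
  | cons C L ih =>
    intro A h
    have hsplit : (A ∩ C.1).card + (A \ C.1).card = A.card :=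
      Finset.card_inter_add_card_sdiff A C.1
    have h1 : (A ∩ C.1).card ≤ C.1.card :=
      Finset.card_le_card (Finset.inter_subset_right)
    have h2 : (A \ C.1).card ≤ (L.map fun p => p.1.card).sum := by
      apply ih
      intro y hy
      obtain ⟨hyA, hyC⟩ := Finset.mem_sdiff.mp hy
      obtain ⟨p, hp, hyp⟩ := h y hyA
      rcases List.mem_cons.mp hp with rfl | hp
      · exact absurd hyp hyC
      · exact ⟨p, hp, hyp⟩
    simp only [List.map_cons, List.sum_cons]
    omega

theorem preimage_bucket_card (hn : 1 ≤ n) (b : Fin (n ^ 128)) :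
    ((univ : Finset (Fin (n ^ 256))).filter fun j => bucket n j = b).card = n ^ 128 := by
  have hr : 0 < n ^ 128 := Nat.pow_pos hn
  have hm : n ^ 256 = n ^ 128 * n ^ 128 := by ring
  have key : ((univ : Finset (Fin (n ^ 256))).filter fun j => bucket n j = b).card =
      (univ : Finset (Fin (n ^ 128))).card := by
    refine Finset.card_nbij' (i := fun j : Fin (n ^ 256) =>
        (⟨j.val % n ^ 128, Nat.mod_lt _ hr⟩ : Fin (n ^ 128)))
      (j := fun k : Fin (n ^ 128) => (⟨b.val * n ^ 128 + k.val, by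
        have hb := b.isLt
        have hk := k.isLt
        calc b.val * n ^ 128 + k.val < b.val * n ^ 128 + n ^ 128 := by omega
          _ = (b.val + 1) * n ^ 128 := by ring
          _ ≤ n ^ 128 * n ^ 128 := Nat.mul_le_mul_right _ (by omega)
          _ = n ^ 256 := hm.symm⟩ : Fin (n ^ 256))) ?_ ?_ ?_ ?_
    · intro j hj
      exact Finset.mem_univ _
    · intro k hk
      refine Finset.mem_filter.mpr ⟨Finset.mem_univ _, ?_⟩
      have : (b.val * n ^ 128 + k.val) / n ^ 128 = b.val := by
        rw [Nat.add_comm, Nat.add_mul_div_right _ _ hr, Nat.div_eq_of_lt k.isLt]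
        omega
      exact Fin.ext this
    · intro j hj
      obtain ⟨_, hbj⟩ := Finset.mem_filter.mp hj
      have hdiv : j.val / n ^ 128 = b.val := congrArg Fin.val hbj
      apply Fin.ext
      show b.val * n ^ 128 + j.val % n ^ 128 = j.val
      rw [← hdiv, Nat.mul_comm]
      exact Nat.div_add_mod _ _
    · intro k hk
      apply Fin.ext
      show (b.val * n ^ 128 + k.val) % n ^ 128 = k.val
      rw [Nat.add_comm, Nat.add_mul_mod_self_right, Nat.mod_eq_of_lt k.isLt]
  rw [key, Finset.card_univ, Fintype.card_fin]

open Classical in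
theorem coord_fix_card (hn : 1 ≤ n) (C : Finset (V n I)) (i : {i // i ∈ I}) :
    ((univ : Finset (Fin (n ^ 256))).filter fun j =>
        BucketFixed n I C i (bucket n j)).card = fixcount n I C i * n ^ 128 := by
  classical
  have h1 : ((univ : Finset (Fin (n ^ 256))).filter fun j =>
      BucketFixed n I C i (bucket n j)).card =
      ∑ b : Fin (n ^ 128), (((univ : Finset (Fin (n ^ 256))).filter fun j =>
        BucketFixed n I C i (bucket n j)).filter fun j => bucket n j = b).card :=
    Finset.card_eq_sum_card_fiberwise (fun x _ => Finset.mem_univ _)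
  have h2 : ∀ b : Fin (n ^ 128), (((univ : Finset (Fin (n ^ 256))).filter fun j =>
      BucketFixed n I C i (bucket n j)).filter fun j => bucket n j = b).card =
      if BucketFixed n I C i b then n ^ 128 else 0 := by
    intro b
    by_cases hb : BucketFixed n I C i b
    · rw [if_pos hb]
      have hset : (((univ : Finset (Fin (n ^ 256))).filter fun j =>
          BucketFixed n I C i (bucket n j)).filter fun j => bucket n j = b) =
          ((univ : Finset (Fin (n ^ 256))).filter fun j => bucket n j = b) := by
        ext j
        simp only [Finset.mem_filter, Finset.mem_univ, true_and]
        constructor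
        · rintro ⟨_, h⟩; exact h
        · intro h; exact ⟨h ▸ hb, h⟩
      rw [hset]
      exact preimage_bucket_card n hn b
    · rw [if_neg hb, Finset.card_eq_zero, Finset.eq_empty_iff_forall_notMem]
      intro j hj
      simp only [Finset.mem_filter, Finset.mem_univ, true_and] at hj
      exact hb (hj.2 ▸ hj.1)
  rw [h1, Finset.sum_congr rfl (fun b _ => h2 b), ← Finset.sum_filter,
    Finset.sum_const, smul_eq_mul]
  congr 1

open Classical in
theorem fix_card_ge (hn : 1 ≤ n) (C : Finset (V n I)) :
    (∑ i : {i // i ∈ I}, fixcount n I C i) * n ^ 128 ≤ (Fix n I C).card := by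
  classical
  have h1 : (Fix n I C).card =
      ∑ i : {i // i ∈ I}, ((Fix n I C).filter fun p => p.1 = i).card :=
    Finset.card_eq_sum_card_fiberwise (fun x _ => Finset.mem_univ _)
  have h2 : ∀ i : {i // i ∈ I}, ((Fix n I C).filter fun p => p.1 = i).card =
      fixcount n I C i * n ^ 128 := by
    intro i
    rw [← coord_fix_card n I hn C i]
    apply Finset.card_bij (i := fun p _ => p.2)
    · rintro p hp
      obtain ⟨hp1, hp2⟩ := Finset.mem_filter.mp hp
      obtain ⟨_, hp3⟩ := Finset.mem_filter.mp hp1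
      refine Finset.mem_filter.mpr ⟨Finset.mem_univ _, ?_⟩
      rw [← hp2]
      exact hp3
    · rintro p hp p' hp' he
      obtain ⟨_, hp2⟩ := Finset.mem_filter.mp hp
      obtain ⟨_, hp2'⟩ := Finset.mem_filter.mp hp'
      have : p.1 = p'.1 := hp2.trans hp2'.symm
      exact Prod.ext this he
    · intro j hj
      obtain ⟨_, hj2⟩ := Finset.mem_filter.mp hj
      exact ⟨(i, j), Finset.mem_filter.mpr ⟨Finset.mem_filter.mpr
        ⟨Finset.mem_univ _, hj2⟩, rfl⟩, rfl⟩
  refine le_of_eq ?_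
  calc (∑ i : {i // i ∈ I}, fixcount n I C i) * n ^ 128
      = ∑ i : {i // i ∈ I}, fixcount n I C i * n ^ 128 := Finset.sum_mul _ _ _
    _ = ∑ i : {i // i ∈ I}, ((Fix n I C).filter fun p => p.1 = i).card :=
        Finset.sum_congr rfl (fun i _ => (h2 i).symm)
    _ = (Fix n I C).card := h1.symm

open Classical in
theorem card_le_free (C : Finset (V n I)) :
    C.card * 2 ^ (Fix n I C).card ≤ 2 ^ (I.card * n ^ 256) := by
  classical
  have hinj : Set.InjOn (fun (y : V n I) =>
      fun p : {p : {i // i ∈ I} × Fin (n ^ 256) // p ∉ Fix n I C} => y p.1.1 p.1.2)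
      (C : Set (V n I)) := by
    intro y hy y' hy' he
    funext i j
    by_cases hp : (i, j) ∈ Fix n I C
    · obtain ⟨_, hfix⟩ := Finset.mem_filter.mp hp
      exact hfix y hy y' hy' j rfl
    · exact congrFun he ⟨(i, j), hp⟩
  have h1 : C.card ≤ Fintype.card
      ({p : {i // i ∈ I} × Fin (n ^ 256) // p ∉ Fix n I C} → Bool) := by
    have := Finset.card_le_card_of_injOn _ (fun a _ => Finset.mem_univ _) hinj
    simpa using this
  rw [Fintype.card_fun, Fintype.card_bool] at h1
  have h2 : Fintype.card {p : {i // i ∈ I} × Fin (n ^ 256) // p ∉ Fix n I C} =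
      I.card * n ^ 256 - (Fix n I C).card := by
    rw [Fintype.card_subtype]
    have hco : ((univ : Finset ({i // i ∈ I} × Fin (n ^ 256))).filter
        fun p => p ∉ Fix n I C) = (Fix n I C)ᶜ := by
      ext p
      simp
    rw [hco, Finset.card_compl, Fintype.card_prod, Fintype.card_coe, Fintype.card_fin]
  rw [h2] at h1
  have h3 : (Fix n I C).card ≤ I.card * n ^ 256 := by
    have := Finset.card_le_univ (Fix n I C)
    rwa [Fintype.card_prod, Fintype.card_coe, Fintype.card_fin] at this
  calc C.card * 2 ^ (Fix n I C).card
      ≤ 2 ^ (I.card * n ^ 256 - (Fix n I C).card) * 2 ^ (Fix n I C).card :=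
        Nat.mul_le_mul_right _ h1
    _ = 2 ^ (I.card * n ^ 256 - (Fix n I C).card + (Fix n I C).card) := (pow_add 2 _ _).symm
    _ = 2 ^ (I.card * n ^ 256) := by congr 1; omega

theorem badsmall (hn : 3 ≤ n) (C : Finset (V n I)) (t : ℕ)
    (hfix : ∀ i, t ≤ fixcount n I C i) (i₀ : {i // i ∈ I})
    (hbad : 2 * n ^ 3 + 1 ≤ fixcount n I C i₀) :
    C.card * 2 ^ (t * (I.card * n ^ 128 - 1)) ≤
      2 ^ (I.card * n ^ 256 - (2 * n ^ 3 + 1)) := by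
  classical
  have hn1 : 1 ≤ n := by omega
  have hr : 1 ≤ n ^ 128 := Nat.one_le_pow _ _ hn1
  have hκ : 1 ≤ I.card := Finset.card_pos.mpr ⟨i₀.1, i₀.2⟩
  set F := ∑ i : {i // i ∈ I}, fixcount n I C i with hF
  have hcard : Fintype.card {i // i ∈ I} = I.card := Fintype.card_coe I
  -- F ≥ κ * t
  have hF1 : I.card * t ≤ F := by
    have := Finset.card_nsmul_le_sum (univ : Finset {i // i ∈ I})
      (fun i => fixcount n I C i) t (fun i _ => hfix i)
    rwa [Finset.card_univ, hcard, smul_eq_mul] at this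
  -- F ≥ (κ - 1) * t + (2n³+1)
  have hF2 : (I.card - 1) * t + (2 * n ^ 3 + 1) ≤ F := by
    have hsplit : F = fixcount n I C i₀ +
        ∑ i ∈ (univ : Finset {i // i ∈ I}).erase i₀, fixcount n I C i := by
      rw [hF, ← Finset.add_sum_erase _ _ (Finset.mem_univ i₀)]
    have herase : (I.card - 1) * t ≤
        ∑ i ∈ (univ : Finset {i // i ∈ I}).erase i₀, fixcount n I C i := by
      have := Finset.card_nsmul_le_sum ((univ : Finset {i // i ∈ I}).erase i₀)
        (fun i => fixcount n I C i) t (fun i _ => hfix i)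
      rwa [Finset.card_erase_of_mem (Finset.mem_univ i₀), Finset.card_univ, hcard,
        smul_eq_mul] at this
    omega
  -- key linear inequality
  obtain ⟨κ1, hκ1⟩ : ∃ κ1, I.card = κ1 + 1 := ⟨I.card - 1, by omega⟩
  obtain ⟨r1, hr1⟩ : ∃ r1, n ^ 128 = r1 + 1 := ⟨n ^ 128 - 1, by omega⟩
  have hkey : t * (I.card * n ^ 128 - 1) + (2 * n ^ 3 + 1) ≤ F * n ^ 128 := by
    have h1' : (κ1 + 1) * t ≤ F := by rw [← hκ1]; exact hF1
    have h2' : κ1 * t + (2 * n ^ 3 + 1) ≤ F := by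
      have he : I.card - 1 = κ1 := by omega
      rw [← he]; exact hF2
    rw [hκ1, hr1]
    have he : (κ1 + 1) * (r1 + 1) - 1 = κ1 * r1 + κ1 + r1 := by
      have : (κ1 + 1) * (r1 + 1) = κ1 * r1 + κ1 + r1 + 1 := by ring
      omega
    rw [he]
    rcases le_or_gt t (2 * n ^ 3) with hc | hc
    · have h3 : (κ1 * t + (2 * n ^ 3 + 1)) * (r1 + 1) ≤ F * (r1 + 1) :=
        Nat.mul_le_mul_right _ h2'
      have h4 : (κ1 * t + (2 * n ^ 3 + 1)) * (r1 + 1) =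
          κ1 * t * r1 + κ1 * t + (2 * n ^ 3 + 1) * r1 + (2 * n ^ 3 + 1) := by ring
      have h5 : t * (κ1 * r1 + κ1 + r1) = κ1 * t * r1 + κ1 * t + t * r1 := by ring
      have h6 : t * r1 ≤ (2 * n ^ 3 + 1) * r1 := Nat.mul_le_mul_right _ (by omega)
      omega
    · have h3 : (κ1 + 1) * t * (r1 + 1) ≤ F * (r1 + 1) := Nat.mul_le_mul_right _ h1'
      have h4 : (κ1 + 1) * t * (r1 + 1) = κ1 * t * r1 + κ1 * t + t * r1 + t := by ring
      have h5 : t * (κ1 * r1 + κ1 + r1) = κ1 * t * r1 + κ1 * t + t * r1 := by ring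
      omega
  -- now combine with card_le_free and fix_card_ge
  have hC1 : C.card * 2 ^ (F * n ^ 128) ≤ 2 ^ (I.card * n ^ 256) := by
    calc C.card * 2 ^ (F * n ^ 128)
        ≤ C.card * 2 ^ (Fix n I C).card :=
          Nat.mul_le_mul_left _ (Nat.pow_le_pow_right (by omega) (fix_card_ge n I hn1 C))
      _ ≤ 2 ^ (I.card * n ^ 256) := card_le_free n I C
  have hbig : 2 * n ^ 3 + 1 ≤ I.card * n ^ 256 := by
    have h1 : 2 * n ^ 3 + 1 ≤ 3 * n ^ 3 := by
      have : 1 ≤ n ^ 3 := Nat.one_le_pow _ _ hn1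
      omega
    have h2 : 3 * n ^ 3 ≤ n * n ^ 3 := Nat.mul_le_mul_right _ hn
    have h3 : n * n ^ 3 = n ^ 4 := by ring
    have h4 : n ^ 4 ≤ n ^ 256 := Nat.pow_le_pow_right hn1 (by omega)
    have h5 : n ^ 256 ≤ I.card * n ^ 256 := Nat.le_mul_of_pos_left _ (by omega)
    omega
  -- C.card * 2^(t*s1) * 2^(2n³+1) ≤ 2^(κ m')
  have hmain : C.card * 2 ^ (t * (I.card * n ^ 128 - 1)) * 2 ^ (2 * n ^ 3 + 1) ≤
      2 ^ (I.card * n ^ 256) := by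
    calc C.card * 2 ^ (t * (I.card * n ^ 128 - 1)) * 2 ^ (2 * n ^ 3 + 1)
        = C.card * 2 ^ (t * (I.card * n ^ 128 - 1) + (2 * n ^ 3 + 1)) := by
          rw [mul_assoc, ← pow_add]
      _ ≤ C.card * 2 ^ (F * n ^ 128) :=
          Nat.mul_le_mul_left _ (Nat.pow_le_pow_right (by omega) hkey)
      _ ≤ 2 ^ (I.card * n ^ 256) := hC1
  have hsplit : 2 ^ (I.card * n ^ 256) =
      2 ^ (I.card * n ^ 256 - (2 * n ^ 3 + 1)) * 2 ^ (2 * n ^ 3 + 1) := by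
    rw [← pow_add]
    congr 1
    omega
  rw [hsplit] at hmain
  exact Nat.le_of_mul_le_mul_right hmain (Nat.pow_pos (by omega))

theorem spec_badmass (hn : 3 ≤ n) : ∀ (Z : Finset (V n I)) (L), Spec n I Z L →
    ((L.filter fun p => decide (¬ ∀ i, fixcount n I p.1 i ≤ 2 * n ^ 3)).map
        fun p => p.1.card).sum ≤ 2 ^ (I.card * n ^ 256 - (2 * n ^ 3 + 1)) := by
  intro Z L
  induction L generalizing Z with
  | nil => intro _; simp
  | cons C L ih =>
    rintro hspec
    obtain ⟨h1, h2, h3, h4, h5, h6⟩ := hspec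
    by_cases hb : ∀ i, fixcount n I C.1 i ≤ 2 * n ^ 3
    · rw [List.filter_cons_of_neg (by simp [hb])]
      exact ih _ h6
    · push_neg at hb
      obtain ⟨i₀, hi₀⟩ := hb
      have hbad : 2 * n ^ 3 + 1 ≤ fixcount n I C.1 i₀ := hi₀
      calc ((((C :: L).filter fun p =>
            decide (¬ ∀ i, fixcount n I p.1 i ≤ 2 * n ^ 3)).map fun p => p.1.card)).sum
          ≤ (((C :: L)).map fun p => p.1.card).sum := list_filter_sum_le n I _ _
        _ = Z.card := spec_mass n I Z _ ⟨h1, h2, h3, h4, h5, h6⟩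
        _ ≤ C.1.card * 2 ^ (C.2 * (I.card * n ^ 128 - 1)) := h5
        _ ≤ 2 ^ (I.card * n ^ 256 - (2 * n ^ 3 + 1)) :=
            badsmall n I hn C.1 C.2 h4 i₀ hbad

end BPB

open Classical in
/-- **Deficiency-reducing bucket partition (Claim for Bob's side).** There is `N` such
that for all `n ≥ N` (with `m = n^256`, `√m = n^128`): if `I ⊆ [n]` is nonempty and
`Y ⊆ ({0,1}^m)^I` is nonempty with `|I|·m − log₂|Y| ≤ n³ + 1`, then with
`ε = (1/2)·n^(−5|I|)` there is a partition `Y = Y⁰ ∪ Y¹ ∪ ⋯ ∪ Y^k` with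
`|Y⁰| ≤ (ε/3)·|Y|` such that every part `Y^c`, `c ≥ 1`, satisfies: (P1) each coordinate
has at most `2n³` fixed buckets; (P2) every bucket union containing no fixed bucket has
deficiency at most 1 in `Y^c`. -/
theorem bucket_partition_bob :
    ∃ N : ℕ, ∀ n : ℕ, N ≤ n →
    ∀ I : Finset (Fin n), I.Nonempty →
    ∀ Y : Finset ({i // i ∈ I} → Fin (n ^ 256) → Bool), Y.Nonempty →
      -- deficiency of Y at most n³ + 1
      ((I.card : ℝ) * ((n ^ 256 : ℕ) : ℝ) - Real.logb 2 (Y.card : ℝ) ≤ (n : ℝ) ^ 3 + 1) →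
      ∃ (Y0 : Finset ({i // i ∈ I} → Fin (n ^ 256) → Bool)) (k : ℕ)
        (P : Fin k → Finset ({i // i ∈ I} → Fin (n ^ 256) → Bool)),
        -- Y = Y⁰ ∪ Y¹ ∪ ⋯ ∪ Y^k is a partition, with Y¹, …, Y^k nonempty
        (∀ c, (P c).Nonempty) ∧
        (∀ c c', c ≠ c' → Disjoint (P c) (P c')) ∧
        (∀ c, Disjoint Y0 (P c)) ∧
        (Y = Y0 ∪ Finset.univ.biUnion P) ∧
        -- |Y⁰| ≤ (ε/3)·|Y| where ε = (1/2)·n^(−5|I|)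
        ((Y0.card : ℝ) ≤ (1 / 2) * (n : ℝ) ^ (-(5 * (I.card : ℝ))) / 3 * (Y.card : ℝ)) ∧
        ∀ c : Fin k,
          -- (P1) each coordinate i has at most 2n³ fixed buckets in Y^c
          (∀ i : {i // i ∈ I},
            (((Finset.univ : Finset (Fin (n ^ 128))).filter
                fun ℓi => BucketFixed n I (P c) i ℓi).card : ℝ) ≤ 2 * (n : ℝ) ^ 3) ∧
          -- (P2) bucket unions without fixed buckets have deficiency at most 1 in Y^c
          (∀ ℓ : {i // i ∈ I} → Fin (n ^ 128),
            (∀ i, ¬ BucketFixed n I (P c) i (ℓ i)) →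
            ∀ γ : {i // i ∈ I} → Fin (n ^ 256) → Bool,
              (((P c).filter fun y => ∀ i, ∀ j : Fin (n ^ 256),
                  bucket n j = ℓ i → y i j = γ i j).card : ℝ) ≤
                2 * (2 : ℝ) ^ (-((I.card : ℝ) * ((n ^ 128 : ℕ) : ℝ))) *
                  ((P c).card : ℝ)) := by
    classical
  refine ⟨16, ?_⟩
  intro n hn I hI Y hY hdef
  have hn3 : 3 ≤ n := by omega
  have hn1 : 1 ≤ n := by omega
  have hκ1 : 1 ≤ I.card := Finset.card_pos.mpr hI
  have hκn : I.card ≤ n := by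
    have := Finset.card_le_univ I
    simpa using this
  have hrpos : 1 ≤ n ^ 128 := Nat.one_le_pow _ _ hn1
  have hbig : 2 * n ^ 3 + 1 ≤ I.card * n ^ 256 := by
    have h1 : 1 ≤ n ^ 3 := Nat.one_le_pow _ _ hn1
    have h2 : 3 * n ^ 3 ≤ n * n ^ 3 := Nat.mul_le_mul_right _ hn3
    have h3 : n * n ^ 3 = n ^ 4 := by ring
    have h4 : n ^ 4 ≤ n ^ 256 := Nat.pow_le_pow_right hn1 (by omega)
    have h5 : n ^ 256 ≤ I.card * n ^ 256 := Nat.le_mul_of_pos_left _ (by omega)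
    omega
  obtain ⟨L, hL⟩ := BPB.spec_exists n I hn1 hI Y
  set goodL := L.filter (fun p => decide (∀ i, BPB.fixcount n I p.1 i ≤ 2 * n ^ 3))
    with hgoodL
  set badL := L.filter (fun p => decide (¬ ∀ i, BPB.fixcount n I p.1 i ≤ 2 * n ^ 3))
    with hbadL
  set P : Fin goodL.length → Finset ({i // i ∈ I} → Fin (n ^ 256) → Bool) :=
    fun c => (goodL.get c).1 with hP
  set Y0 : Finset ({i // i ∈ I} → Fin (n ^ 256) → Bool) := Y \ univ.biUnion P with hY0
  have hPgood : ∀ c, goodL.get c ∈ goodL := by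
    intro c
    exact List.get_mem goodL c
  have hPL : ∀ c, goodL.get c ∈ L := fun c => List.mem_of_mem_filter (hPgood c)
  have hparts := BPB.spec_parts n I Y L hL
  refine ⟨Y0, goodL.length, P, ?_, ?_, ?_, ?_, ?_, ?_⟩
  · -- nonempty
    intro c
    exact (hparts _ (hPL c)).1
  · -- pairwise disjoint
    intro c c' hcc
    have hpw : goodL.Pairwise (fun p q => Disjoint p.1 q.1) :=
      List.Pairwise.sublist List.filter_sublist (BPB.spec_pairwise n I Y L hL)
    have hget := List.pairwise_iff_get.mp hpw
    rcases lt_or_gt_of_ne hcc with h | h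
    · exact hget c c' h
    · exact (hget c' c h).symm
  · -- Y0 disjoint from parts
    intro c
    rw [Finset.disjoint_left]
    intro y hy hyc
    have h2 := (Finset.mem_sdiff.mp hy).2
    exact h2 (Finset.mem_biUnion.mpr ⟨c, Finset.mem_univ _, hyc⟩)
  · -- partition
    have hsub : univ.biUnion P ⊆ Y := by
      intro y hy
      obtain ⟨c, _, hc⟩ := Finset.mem_biUnion.mp hy
      exact BPB.spec_subset n I Y L hL _ (hPL c) hc
    rw [hY0]
    rw [Finset.sdiff_union_of_subset hsub]
  · -- size of Y0
    have hcov : ∀ y ∈ Y0, ∃ p ∈ badL, y ∈ p.1 := by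
      intro y hy
      obtain ⟨hyY, hyB⟩ := Finset.mem_sdiff.mp hy
      obtain ⟨p, hpL, hyp⟩ := (BPB.spec_mem n I Y L hL y).mp hyY
      by_cases hp : ∀ i, BPB.fixcount n I p.1 i ≤ 2 * n ^ 3
      · exfalso
        have hpg : p ∈ goodL := List.mem_filter.mpr ⟨hpL, by simpa using hp⟩
        obtain ⟨c, hc⟩ := List.mem_iff_get.mp hpg
        refine hyB (Finset.mem_biUnion.mpr ⟨c, Finset.mem_univ _, ?_⟩)
        show y ∈ (goodL.get c).1
        rw [hc]
        exact hyp
      · exact ⟨p, List.mem_filter.mpr ⟨hpL, by simpa using hp⟩, hyp⟩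
    have hY0card : Y0.card ≤ 2 ^ (I.card * n ^ 256 - (2 * n ^ 3 + 1)) :=
      le_trans (BPB.card_cover badL Y0 hcov) (BPB.spec_badmass n I hn3 Y L hL)
    have hnat2 : Y0.card * 2 ^ (n ^ 3) ≤ 2 ^ (I.card * n ^ 256 - (n ^ 3 + 1)) := by
      calc Y0.card * 2 ^ (n ^ 3)
          ≤ 2 ^ (I.card * n ^ 256 - (2 * n ^ 3 + 1)) * 2 ^ (n ^ 3) :=
            Nat.mul_le_mul_right _ hY0card
        _ = 2 ^ (I.card * n ^ 256 - (2 * n ^ 3 + 1) + n ^ 3) := (pow_add 2 _ _).symm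
        _ = 2 ^ (I.card * n ^ 256 - (n ^ 3 + 1)) := by congr 1; omega
    have hYpos : 0 < (Y.card : ℝ) := by exact_mod_cast Finset.card_pos.mpr hY
    have hlogb : ((I.card * n ^ 256 - (n ^ 3 + 1) : ℕ) : ℝ) ≤ Real.logb 2 (Y.card : ℝ) := by
      have h1 : (I.card : ℝ) * ((n ^ 256 : ℕ) : ℝ) - ((n : ℝ) ^ 3 + 1) ≤
          Real.logb 2 (Y.card : ℝ) := by linarith [hdef]
      have hle : n ^ 3 + 1 ≤ I.card * n ^ 256 := by omega
      have h2 : ((I.card * n ^ 256 - (n ^ 3 + 1) : ℕ) : ℝ) =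
          (I.card : ℝ) * ((n ^ 256 : ℕ) : ℝ) - ((n : ℝ) ^ 3 + 1) := by
        push_cast [hle]
        ring
      rw [h2]
      exact h1
    have hYlb : ((2 : ℝ) ^ (I.card * n ^ 256 - (n ^ 3 + 1) : ℕ)) ≤ (Y.card : ℝ) := by
      have h1 := Real.rpow_le_rpow_of_exponent_le (by norm_num : (1:ℝ) ≤ 2) hlogb
      rw [Real.rpow_logb (by norm_num) (by norm_num) hYpos] at h1
      calc ((2 : ℝ) ^ (I.card * n ^ 256 - (n ^ 3 + 1) : ℕ))
          = (2 : ℝ) ^ (((I.card * n ^ 256 - (n ^ 3 + 1) : ℕ) : ℝ)) :=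
            (Real.rpow_natCast 2 _).symm
        _ ≤ (Y.card : ℝ) := h1
    have hA : (Y0.card : ℝ) * 2 ^ (n ^ 3) ≤ (Y.card : ℝ) := by
      have h1 : (Y0.card : ℝ) * 2 ^ (n ^ 3) ≤
          ((2 : ℝ) ^ (I.card * n ^ 256 - (n ^ 3 + 1) : ℕ)) := by exact_mod_cast hnat2
      exact le_trans h1 hYlb
    have hB' : 6 * n ^ (5 * I.card) ≤ 2 ^ (n ^ 3) := by
      have e1 : n ^ (5 * I.card) ≤ n ^ (5 * n) :=
        Nat.pow_le_pow_right hn1 (by omega)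
      have e2 : n ^ (5 * n) ≤ (2 ^ n) ^ (5 * n) :=
        Nat.pow_le_pow_left (Nat.lt_two_pow_self (n := n)).le _
      have e3 : (2 ^ n) ^ (5 * n) = 2 ^ (n * (5 * n)) := by
        rw [← pow_mul]
      have e4 : 6 * 2 ^ (n * (5 * n)) ≤ 2 ^ 3 * 2 ^ (n * (5 * n)) :=
        Nat.mul_le_mul_right _ (by norm_num)
      have e5 : 2 ^ 3 * 2 ^ (n * (5 * n)) = 2 ^ (3 + n * (5 * n)) := (pow_add 2 _ _).symm
      have e6 : 3 + n * (5 * n) ≤ n ^ 3 := by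
        have f1 : n * (5 * n) = 5 * (n * n) := by ring
        have f2 : n ^ 3 = n * (n * n) := by ring
        have f3 : 16 * (n * n) ≤ n * (n * n) := Nat.mul_le_mul_right _ hn
        have f4 : 1 ≤ n * n := Nat.one_le_iff_ne_zero.mpr (Nat.mul_ne_zero (by omega) (by omega))
        omega
      have e7 : 2 ^ (3 + n * (5 * n)) ≤ 2 ^ (n ^ 3) := Nat.pow_le_pow_right (by omega) e6
      calc 6 * n ^ (5 * I.card) ≤ 6 * 2 ^ (n * (5 * n)) := by
            refine Nat.mul_le_mul_left _ ?_
            exact le_trans e1 (le_trans e2 (le_of_eq e3))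
        _ ≤ 2 ^ 3 * 2 ^ (n * (5 * n)) := e4
        _ = 2 ^ (3 + n * (5 * n)) := e5
        _ ≤ 2 ^ (n ^ 3) := e7
    have hB : (6 : ℝ) * (n : ℝ) ^ (5 * I.card) ≤ (2 : ℝ) ^ (n ^ 3) := by
      exact_mod_cast hB'
    have hrw : (n : ℝ) ^ (-(5 * (I.card : ℝ))) = ((n : ℝ) ^ (5 * I.card))⁻¹ := by
      rw [show -(5 * (I.card : ℝ)) = -(((5 * I.card : ℕ)) : ℝ) by push_cast; ring]
      rw [Real.rpow_neg (by positivity), Real.rpow_natCast]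
    rw [hrw]
    have hnp : (0 : ℝ) < (n : ℝ) ^ (5 * I.card) := by positivity
    have h6 : (0 : ℝ) < 6 * (n : ℝ) ^ (5 * I.card) := by positivity
    have htarget : (Y0.card : ℝ) * (6 * (n : ℝ) ^ (5 * I.card)) ≤ (Y.card : ℝ) := by
      calc (Y0.card : ℝ) * (6 * (n : ℝ) ^ (5 * I.card))
          ≤ (Y0.card : ℝ) * (2 : ℝ) ^ (n ^ 3) := by
            apply mul_le_mul_of_nonneg_left hB (by positivity)
        _ ≤ (Y.card : ℝ) := hA
    have hxx : ((n : ℝ) ^ (5 * I.card))⁻¹ * (n : ℝ) ^ (5 * I.card) = 1 :=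
      inv_mul_cancel₀ (ne_of_gt hnp)
    have heq : (1 : ℝ) / 2 * ((n : ℝ) ^ (5 * I.card))⁻¹ / 3 * (Y.card : ℝ) *
        (6 * (n : ℝ) ^ (5 * I.card)) = (Y.card : ℝ) := by
      calc (1 : ℝ) / 2 * ((n : ℝ) ^ (5 * I.card))⁻¹ / 3 * (Y.card : ℝ) *
          (6 * (n : ℝ) ^ (5 * I.card))
          = (Y.card : ℝ) * (((n : ℝ) ^ (5 * I.card))⁻¹ * (n : ℝ) ^ (5 * I.card)) := by
            ring
        _ = (Y.card : ℝ) := by rw [hxx, mul_one]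
    refine le_of_mul_le_mul_right ?_ h6
    rw [heq]
    exact htarget
  · -- P1 and P2
    intro c
    have hgm := hPgood c
    obtain ⟨_, hgd⟩ := List.mem_filter.mp hgm
    have hgood2 : ∀ i, BPB.fixcount n I (P c) i ≤ 2 * n ^ 3 := by
      have := of_decide_eq_true hgd
      exact this
    constructor
    · -- P1
      intro i
      have h1 : ((BPB.fixcount n I (P c) i : ℕ) : ℝ) ≤ 2 * (n : ℝ) ^ 3 := by
        calc ((BPB.fixcount n I (P c) i : ℕ) : ℝ) ≤ ((2 * n ^ 3 : ℕ) : ℝ) := by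
              exact_mod_cast hgood2 i
          _ = 2 * (n : ℝ) ^ 3 := by push_cast; ring
      exact h1
    · -- P2
      intro ℓ hℓ γ
      have hclean : BPB.Clean n I (P c) := (hparts _ (hPL c)).2.1
      have hnat := hclean ℓ hℓ γ
      have hs1 : I.card * n ^ 128 = (I.card * n ^ 128 - 1) + 1 := by
        have h1 : 0 < I.card * n ^ 128 :=
          Nat.mul_pos hκ1 (Nat.pow_pos hn1)
        exact (Nat.succ_pred_eq_of_pos h1).symm
      set cnt := ((P c).filter fun y => ∀ i, ∀ j : Fin (n ^ 256),
          bucket n j = ℓ i → y i j = γ i j).card with hcnt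
      have hnat2 : cnt * 2 ^ (I.card * n ^ 128) ≤ 2 * (P c).card := by
        have h2 : cnt * 2 ^ (I.card * n ^ 128) = cnt * 2 ^ (I.card * n ^ 128 - 1) * 2 := by
          conv_lhs => rw [hs1]
          rw [pow_succ, ← mul_assoc]
        rw [h2]
        calc cnt * 2 ^ (I.card * n ^ 128 - 1) * 2
            ≤ (P c).card * 2 := Nat.mul_le_mul_right _ hnat
          _ = 2 * (P c).card := by ring
      rw [show -((I.card : ℝ) * ((n ^ 128 : ℕ) : ℝ)) = -(((I.card * n ^ 128 : ℕ)) : ℝ) by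
        push_cast; ring]
      rw [Real.rpow_neg (by norm_num), Real.rpow_natCast]
      rw [show (2 : ℝ) * ((2 : ℝ) ^ (I.card * n ^ 128))⁻¹ * ((P c).card : ℝ) =
        2 * ((P c).card : ℝ) / ((2 : ℝ) ^ (I.card * n ^ 128)) by ring]
      rw [le_div_iff₀ (by positivity)]
      exact_mod_cast hnat2
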